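/- arXiv:2201.01248 — 3 statements merged into one kernel-verified Lean document; each statement's English description precedes it below -/
import Mathlib

section
/- Assume 𝒢 is connected. If (λ, g) is an eigenpair of ℋ_p with g(u) > 0 for every u ∈ V, then λ = λ₁, where λ₁ = min_{f ∈ 𝒮_p} ℛ(f) is the first variational eigenvalue of ℋ_p. -/
noncomputable section

open Finset

/-- `φ_p(x) = |x|^{p-2} x` (real exponent, `φ_p(0) = 0`). -/
def phiP (p x : ℝ) : ℝ := |x| ^ (p - 2) * x

/-- The generalized `p`-Laplacian `ℋ_p`.  The edge-weight function `ω` is assumed to be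
symmetric and to vanish on pairs of non-adjacent vertices, so the sum over all vertices
is the sum over the neighbours of `u`. -/
def genLap {V : Type*} [Fintype V] (ω : V → V → ℝ) (κ : V → ℝ) (p : ℝ)
    (f : V → ℝ) (u : V) : ℝ :=
  (∑ v : V, ω u v * phiP p (f u - f v)) + κ u * phiP p (f u)

/-- `(lam, f)` is an eigenpair of `ℋ_p`. -/
def IsEigenpair {V : Type*} [Fintype V] (ω : V → V → ℝ) (κ ϱ : V → ℝ) (p lam : ℝ)
    (f : V → ℝ) : Prop :=
  f ≠ 0 ∧ ∀ u, genLap ω κ p f u = lam * (ϱ u * phiP p (f u))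

/-- The Rayleigh quotient `ℛ` of `ℋ_p` (each edge `uv` is counted once: the double sum
counts it twice, whence the factor `1/2`). -/
def rayleigh {V : Type*} [Fintype V] (ω : V → V → ℝ) (κ ϱ : V → ℝ) (p : ℝ)
    (f : V → ℝ) : ℝ :=
  ((1 / 2) * ∑ u : V, ∑ v : V, ω u v * |f u - f v| ^ p + ∑ u : V, κ u * |f u| ^ p) /
    ∑ u : V, ϱ u * |f u| ^ p

/-- The `p`-sphere `𝒮_p`. -/
def pSphere (V : Type*) [Fintype V] (p : ℝ) : Set (V → ℝ) := {f | ∑ u : V, |f u| ^ p = 1}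

/-- The Krasnoselskii genus of a (symmetric) subset of `ℝ^V`. -/
def krasGenus {V : Type*} [Fintype V] (A : Set (V → ℝ)) : ℕ∞ :=
  sInf {n : ℕ∞ | ∃ k : ℕ, n = (k : ℕ∞) ∧ ∃ φ : (V → ℝ) → (Fin k → ℝ),
    ContinuousOn φ A ∧ (∀ x ∈ A, φ (-x) = -φ x) ∧ ∀ x ∈ A, φ x ≠ 0}

/-- The `k`-th variational eigenvalue of `ℋ_p`: the min over closed symmetric subsets of the
`p`-sphere of genus at least `k` of the max of the Rayleigh quotient. -/
def varEig {V : Type*} [Fintype V] (ω : V → V → ℝ) (κ ϱ : V → ℝ) (p : ℝ) (k : ℕ) : ℝ :=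
  sInf {r : ℝ | ∃ A : Set (V → ℝ), A ⊆ pSphere V p ∧ IsClosed A ∧ (∀ f ∈ A, -f ∈ A) ∧
    (k : ℕ∞) ≤ krasGenus A ∧ IsGreatest (rayleigh ω κ ϱ p '' A) r}

/-- The subgraph `𝒢₊(f)`: vertices where `f ≠ 0`, edges where `f` has equal nonzero signs. -/
def posGraph {V : Type*} (G : SimpleGraph V) (f : V → ℝ) : SimpleGraph V where
  Adj u v := G.Adj u v ∧ 0 < f u * f v
  symm := ⟨by
    intro u v h
    exact ⟨h.1.symm, by rw [mul_comm]; exact h.2⟩⟩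
  loopless := ⟨fun u h => G.loopless.irrefl u h.1⟩

/-- The number `ν(f)` of (strong) nodal domains of `f`: the number of connected components of
`𝒢₊(f)` consisting of vertices where `f` is nonzero. -/
def nodalCount {V : Type*} (G : SimpleGraph V) (f : V → ℝ) : ℕ :=
  {c : (posGraph G f).ConnectedComponent |
    ∀ u, (posGraph G f).connectedComponentMk u = c → f u ≠ 0}.ncard

/-- The subgraph of edges on which `f` changes sign. -/
def negGraph {V : Type*} (G : SimpleGraph V) (f : V → ℝ) : SimpleGraph V where
  Adj u v := G.Adj u v ∧ f u * f v < 0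
  symm := ⟨by
    intro u v h
    exact ⟨h.1.symm, by rw [mul_comm]; exact h.2⟩⟩
  loopless := ⟨fun u h => G.loopless.irrefl u h.1⟩

/-- `ζ(f)`: the number of edges on which `f` changes sign. -/
def zetaCount {V : Type*} [Fintype V] (G : SimpleGraph V) (f : V → ℝ) : ℕ :=
  (negGraph G f).edgeSet.ncard

/-- `z(f)`: the number of vertices where `f` vanishes. -/
def zeroCount {V : Type*} [Fintype V] (f : V → ℝ) : ℕ := {u : V | f u = 0}.ncard

/-- `l(f)`: the number of independent loops (cycle rank) of `𝒢₊(f)`,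
`|E(𝒢₊(f))| − |V(𝒢₊(f))| + ν(f)`. -/
def loopCount {V : Type*} [Fintype V] (G : SimpleGraph V) (f : V → ℝ) : ℤ :=
  ((posGraph G f).edgeSet.ncard : ℤ) - ({u : V | f u ≠ 0}.ncard : ℤ) + (nodalCount G f : ℤ)

/-- The subgraph `𝒢'(f)` of `𝒢` induced on the support of `f` (vertices with `f = 0` are
deleted together with all incident edges; in this encoding they are kept as isolated
vertices, which are discarded in the counts below). -/
def suppGraph {V : Type*} (G : SimpleGraph V) (f : V → ℝ) : SimpleGraph V where
  Adj u v := G.Adj u v ∧ f u ≠ 0 ∧ f v ≠ 0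
  symm := ⟨by
    intro u v h
    exact ⟨h.1.symm, h.2.2, h.2.1⟩⟩
  loopless := ⟨fun u h => G.loopless.irrefl u h.1⟩

/-- `c(f)`: the number of connected components of `𝒢'(f)`. -/
def compCount {V : Type*} (G : SimpleGraph V) (f : V → ℝ) : ℕ :=
  {c : (suppGraph G f).ConnectedComponent |
    ∀ u, (suppGraph G f).connectedComponentMk u = c → f u ≠ 0}.ncard

/-- `β'(f)`: the number of independent loops of `𝒢'(f)`,
`|E(𝒢'(f))| − |V(𝒢'(f))| + c(f)`. -/
def betaSupp {V : Type*} [Fintype V] (G : SimpleGraph V) (f : V → ℝ) : ℤ :=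
  ((suppGraph G f).edgeSet.ncard : ℤ) - ({u : V | f u ≠ 0}.ncard : ℤ) + (compCount G f : ℤ)

lemma phiP_neg (p x : ℝ) : phiP p (-x) = - phiP p x := by
  simp [phiP, abs_neg, mul_comm]

lemma phiP_mul_self (p : ℝ) (hp : 1 < p) (t : ℝ) : phiP p t * t = |t| ^ p := by
  rcases eq_or_ne t 0 with h | h
  · simp [phiP, h, Real.zero_rpow (by linarith : p ≠ 0)]
  · have ht : (0:ℝ) < |t| := abs_pos.2 h
    have h1 : phiP p t * t = |t| ^ (p - 2) * t ^ 2 := by rw [phiP]; ring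
    have h2 : t ^ 2 = |t| ^ (2:ℝ) := by
      rw [← sq_abs, ← Real.rpow_natCast (|t|) 2]; norm_num
    rw [h1, h2, ← Real.rpow_add ht]
    norm_num

lemma phiP_of_pos (p : ℝ) {t : ℝ} (ht : 0 < t) : phiP p t = t ^ (p - 1) := by
  rw [phiP, abs_of_pos ht]
  nth_rewrite 2 [show t = t ^ (1:ℝ) by simp]
  rw [← Real.rpow_add ht]
  ring_nf

/-- Subadditivity of the perspective of `x ↦ x^p`. -/

lemma perspective_subadd (p : ℝ) (hp : 1 ≤ p) {c d A B : ℝ} (hc : 0 ≤ c) (hd : 0 ≤ d)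
    (hA : 0 < A) (hB : 0 < B) :
    (c + d) ^ p / (A + B) ^ (p - 1) ≤ c ^ p / A ^ (p - 1) + d ^ p / B ^ (p - 1) := by
  have hAB : 0 < A + B := by linarith
  have key := (convexOn_rpow hp).2
    (Set.mem_Ici.2 (div_nonneg hc hA.le)) (Set.mem_Ici.2 (div_nonneg hd hB.le))
    (div_nonneg hA.le hAB.le)
    (div_nonneg hB.le hAB.le) (by field_simp : A / (A + B) + B / (A + B) = 1)
  simp only [smul_eq_mul] at key
  have e1 : A / (A + B) * (c / A) + B / (A + B) * (d / B) = (c + d) / (A + B) := by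
    field_simp
  rw [e1] at key
  -- key : ((c+d)/(A+B))^p ≤ A/(A+B) * (c/A)^p + B/(A+B)*(d/B)^p
  have hd1 : ((c + d) / (A + B)) ^ p = (c + d) ^ p / (A + B) ^ p :=
    Real.div_rpow (by linarith) hAB.le p
  have hd2 : (c / A) ^ p = c ^ p / A ^ p := Real.div_rpow hc hA.le p
  have hd3 : (d / B) ^ p = d ^ p / B ^ p := Real.div_rpow hd hB.le p
  rw [hd1, hd2, hd3] at key
  have hABp : (A + B) ^ p = (A + B) * (A + B) ^ (p - 1) := by
    nth_rewrite 2 [show A + B = (A + B) ^ (1:ℝ) by simp]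
    rw [← Real.rpow_add hAB]; ring_nf
  have hAp : A ^ p = A * A ^ (p - 1) := by
    nth_rewrite 2 [show A = A ^ (1:ℝ) by simp]
    rw [← Real.rpow_add hA]; ring_nf
  have hBp : B ^ p = B * B ^ (p - 1) := by
    nth_rewrite 2 [show B = B ^ (1:ℝ) by simp]
    rw [← Real.rpow_add hB]; ring_nf
  rw [hABp, hAp, hBp] at key
  have h1 : (0:ℝ) < A ^ (p-1) := Real.rpow_pos_of_pos hA _
  have h2 : (0:ℝ) < B ^ (p-1) := Real.rpow_pos_of_pos hB _
  have h3 : (0:ℝ) < (A+B) ^ (p-1) := Real.rpow_pos_of_pos hAB _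
  calc (c + d) ^ p / (A + B) ^ (p - 1)
      = (A + B) * ((c + d) ^ p / ((A + B) * (A + B) ^ (p - 1)))  := by
        field_simp
    _ ≤ (A + B) * (A / (A + B) * (c ^ p / (A * A ^ (p - 1))) +
        B / (A + B) * (d ^ p / (B * B ^ (p - 1)))) :=
        mul_le_mul_of_nonneg_left key hAB.le
    _ = c ^ p / A ^ (p - 1) + d ^ p / B ^ (p - 1) := by field_simp

lemma picone_aux (p : ℝ) (hp : 1 < p) {a b X Y : ℝ} (ha : 0 < b) (hab : b ≤ a)
    (hX : 0 ≤ X) (hY : 0 ≤ Y) :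
    phiP p (a - b) * (X ^ p / a ^ (p - 1) - Y ^ p / b ^ (p - 1)) ≤ |X - Y| ^ p := by
  have hA : 0 < a := lt_of_lt_of_le ha hab
  rcases eq_or_lt_of_le hab with h | h
  · simp [phiP, ← h, Real.rpow_nonneg (abs_nonneg (X - Y))]
  have hd : 0 < a - b := by linarith
  have hphi : phiP p (a - b) = (a - b) ^ (p - 1) := phiP_of_pos p hd
  have hphipos : 0 < (a - b) ^ (p - 1) := Real.rpow_pos_of_pos hd _
  rcases le_or_gt X Y with hXY | hXY
  · -- bracket nonpositive
    have h1 : X ^ p ≤ Y ^ p := Real.rpow_le_rpow hX hXY (by linarith)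
    have h2 : b ^ (p - 1) ≤ a ^ (p - 1) := Real.rpow_le_rpow ha.le hab (by linarith)
    have hb1 : 0 < b ^ (p - 1) := Real.rpow_pos_of_pos ha _
    have ha1 : 0 < a ^ (p - 1) := Real.rpow_pos_of_pos hA _
    have : X ^ p / a ^ (p - 1) ≤ Y ^ p / b ^ (p - 1) :=
      div_le_div₀ (Real.rpow_nonneg hY p) h1 hb1 h2
    have : phiP p (a - b) * (X ^ p / a ^ (p - 1) - Y ^ p / b ^ (p - 1)) ≤ 0 := by
      rw [hphi]
      exact mul_nonpos_of_nonneg_of_nonpos hphipos.le (by linarith)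
    exact this.trans (Real.rpow_nonneg (abs_nonneg _) p)
  · -- X > Y : perspective subadditivity
    have key := perspective_subadd p hp.le (c := X - Y) (d := Y) (A := a - b) (B := b)
      (by linarith) hY hd ha
    rw [show X - Y + Y = X by ring, show a - b + b = a by ring] at key
    rw [hphi, abs_of_pos (by linarith : 0 < X - Y)]
    have h2 : (a - b) ^ (p - 1) * (X ^ p / a ^ (p - 1) - Y ^ p / b ^ (p - 1))
        ≤ (a - b) ^ (p - 1) * ((X - Y) ^ p / (a - b) ^ (p - 1)) := by
      apply mul_le_mul_of_nonneg_left _ hphipos.le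
      linarith
    calc (a - b) ^ (p - 1) * (X ^ p / a ^ (p - 1) - Y ^ p / b ^ (p - 1))
        ≤ (a - b) ^ (p - 1) * ((X - Y) ^ p / (a - b) ^ (p - 1)) := h2
      _ = (X - Y) ^ p := by field_simp

/-- Discrete Picone inequality. -/

lemma picone (p : ℝ) (hp : 1 < p) {a b X Y : ℝ} (ha : 0 < a) (hb : 0 < b)
    (hX : 0 ≤ X) (hY : 0 ≤ Y) :
    phiP p (a - b) * (X ^ p / a ^ (p - 1) - Y ^ p / b ^ (p - 1)) ≤ |X - Y| ^ p := by
  rcases le_total b a with h | h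
  · exact picone_aux p hp hb h hX hY
  · have := picone_aux p hp ha h hY hX
    rw [show b - a = -(a - b) by ring, phiP_neg] at this
    rw [show |X - Y| = |Y - X| by rw [abs_sub_comm]]
    nlinarith [this]


lemma sum_sym {V : Type*} [Fintype V] (T : V → V → ℝ) :
    ∑ u : V, ∑ v : V, (T u v + T v u) = 2 * ∑ u : V, ∑ v : V, T u v := by
  simp only [Finset.sum_add_distrib]
  rw [show (∑ u : V, ∑ v : V, T v u) = ∑ u : V, ∑ v : V, T u v from Finset.sum_comm]
  ring

lemma factA {V : Type*} [Fintype V] (ω : V → V → ℝ) (κ ϱ : V → ℝ) (p lam : ℝ) (hp : 1 < p) (hωsymm : ∀ u v, ω u v = ω v u) (g : V → ℝ)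
    (heig : ∀ u, genLap ω κ p g u = lam * (ϱ u * phiP p (g u))) :
    (1/2) * (∑ u : V, ∑ v : V, ω u v * |g u - g v| ^ p) + ∑ u : V, κ u * |g u| ^ p
      = lam * ∑ u : V, ϱ u * |g u| ^ p := by
  have key : ∑ u : V, genLap ω κ p g u * g u = lam * ∑ u : V, ϱ u * |g u| ^ p := by
    rw [Finset.mul_sum]
    refine Finset.sum_congr rfl fun u _ => ?_
    rw [heig u, show lam * (ϱ u * phiP p (g u)) * g u = lam * (ϱ u * (phiP p (g u) * g u)) by
      ring, phiP_mul_self p hp]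
  have expand : ∑ u : V, genLap ω κ p g u * g u
      = (∑ u : V, ∑ v : V, ω u v * phiP p (g u - g v) * g u)
        + ∑ u : V, κ u * |g u| ^ p := by
    rw [← Finset.sum_add_distrib]
    refine Finset.sum_congr rfl fun u _ => ?_
    rw [genLap, add_mul, Finset.sum_mul, show κ u * phiP p (g u) * g u
      = κ u * (phiP p (g u) * g u) by ring, phiP_mul_self p hp]
  have dsum : ∑ u : V, ∑ v : V, ω u v * phiP p (g u - g v) * g u
      = (1/2) * ∑ u : V, ∑ v : V, ω u v * |g u - g v| ^ p := by
    have h2 := sum_sym (fun u v => ω u v * phiP p (g u - g v) * g u)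
    have h3 : ∑ u : V, ∑ v : V, (ω u v * phiP p (g u - g v) * g u
        + ω v u * phiP p (g v - g u) * g v)
        = ∑ u : V, ∑ v : V, ω u v * |g u - g v| ^ p := by
      refine Finset.sum_congr rfl fun u _ => Finset.sum_congr rfl fun v _ => ?_
      rw [hωsymm v u, show g v - g u = -(g u - g v) by ring, phiP_neg,
        ← phiP_mul_self p hp (g u - g v)]
      ring
    rw [h3] at h2
    linarith
  rw [← key, expand, dsum]

lemma factB {V : Type*} [Fintype V] (ω : V → V → ℝ) (κ ϱ : V → ℝ) (p lam : ℝ) (hp : 1 < p) (hωsymm : ∀ u v, ω u v = ω v u)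
    (hωnn : ∀ u v, 0 ≤ ω u v) (g : V → ℝ)
    (heig : ∀ u, genLap ω κ p g u = lam * (ϱ u * phiP p (g u)))
    (hpos : ∀ u, 0 < g u) (f : V → ℝ) :
    lam * ∑ u : V, ϱ u * |f u| ^ p
      ≤ (1/2) * (∑ u : V, ∑ v : V, ω u v * |f u - f v| ^ p)
        + ∑ u : V, κ u * |f u| ^ p := by
  set W : V → ℝ := fun u => |f u| ^ p / (g u) ^ (p - 1) with hW
  have hgp : ∀ u, (0:ℝ) < (g u) ^ (p - 1) := fun u => Real.rpow_pos_of_pos (hpos u) _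
  have hphiW : ∀ u, phiP p (g u) * W u = |f u| ^ p := by
    intro u
    rw [hW, phiP_of_pos p (hpos u), mul_comm, div_mul_cancel₀ _ (hgp u).ne']
  have key : ∑ u : V, genLap ω κ p g u * W u = lam * ∑ u : V, ϱ u * |f u| ^ p := by
    rw [Finset.mul_sum]
    refine Finset.sum_congr rfl fun u _ => ?_
    rw [heig u, show lam * (ϱ u * phiP p (g u)) * W u = lam * (ϱ u * (phiP p (g u) * W u)) by
      ring, hphiW u]
  have expand : ∑ u : V, genLap ω κ p g u * W u
      = (∑ u : V, ∑ v : V, ω u v * phiP p (g u - g v) * W u)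
        + ∑ u : V, κ u * |f u| ^ p := by
    rw [← Finset.sum_add_distrib]
    refine Finset.sum_congr rfl fun u _ => ?_
    rw [genLap, add_mul, Finset.sum_mul, show κ u * phiP p (g u) * W u
      = κ u * (phiP p (g u) * W u) by ring, hphiW u]
  have dsum : ∑ u : V, ∑ v : V, ω u v * phiP p (g u - g v) * W u
      ≤ (1/2) * ∑ u : V, ∑ v : V, ω u v * |f u - f v| ^ p := by
    have h2 := sum_sym (fun u v => ω u v * phiP p (g u - g v) * W u)
    have h3 : ∑ u : V, ∑ v : V, (ω u v * phiP p (g u - g v) * W u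
        + ω v u * phiP p (g v - g u) * W v)
        ≤ ∑ u : V, ∑ v : V, ω u v * |f u - f v| ^ p := by
      refine Finset.sum_le_sum fun u _ => Finset.sum_le_sum fun v _ => ?_
      rw [hωsymm v u, show g v - g u = -(g u - g v) by ring, phiP_neg]
      have hpic := picone p hp (hpos u) (hpos v) (abs_nonneg (f u)) (abs_nonneg (f v))
      have habs : abs (|f u| - |f v|) ^ p ≤ |f u - f v| ^ p :=
        Real.rpow_le_rpow (abs_nonneg _) (abs_abs_sub_abs_le_abs_sub _ _) (by linarith)
      calc ω u v * phiP p (g u - g v) * W u + ω u v * (-phiP p (g u - g v)) * W v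
          = ω u v * (phiP p (g u - g v) * (W u - W v)) := by ring
        _ ≤ ω u v * |f u - f v| ^ p := by
            apply mul_le_mul_of_nonneg_left _ (hωnn u v)
            exact le_trans hpic habs
    linarith
  linarith [key, expand, dsum]

lemma rayleigh_smul {V : Type*} [Fintype V] (ω : V → V → ℝ) (κ ϱ : V → ℝ) (p : ℝ)
    {t : ℝ} (ht : 0 < t) (f : V → ℝ) :
    rayleigh ω κ ϱ p (fun u => t * f u) = rayleigh ω κ ϱ p f := by
  have hc : ∀ x : ℝ, |t * x| ^ p = t ^ p * |x| ^ p := fun x => by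
    rw [abs_mul, abs_of_pos ht, Real.mul_rpow ht.le (abs_nonneg x)]
  simp only [rayleigh]
  have h1 : ∑ u : V, ∑ v : V, ω u v * |t * f u - t * f v| ^ p
      = t ^ p * ∑ u : V, ∑ v : V, ω u v * |f u - f v| ^ p := by
    rw [Finset.mul_sum]
    refine Finset.sum_congr rfl fun u _ => ?_
    rw [Finset.mul_sum]
    refine Finset.sum_congr rfl fun v _ => ?_
    rw [show t * f u - t * f v = t * (f u - f v) by ring, hc]
    ring
  have h2 : ∑ u : V, κ u * |t * f u| ^ p = t ^ p * ∑ u : V, κ u * |f u| ^ p := by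
    rw [Finset.mul_sum]
    exact Finset.sum_congr rfl fun u _ => by rw [hc]; ring
  have h3 : ∑ u : V, ϱ u * |t * f u| ^ p = t ^ p * ∑ u : V, ϱ u * |f u| ^ p := by
    rw [Finset.mul_sum]
    exact Finset.sum_congr rfl fun u _ => by rw [hc]; ring
  rw [h1, h2, h3]
  have htp : t ^ p ≠ 0 := (Real.rpow_pos_of_pos ht p).ne'
  generalize (∑ u : V, ∑ v : V, ω u v * |f u - f v| ^ p) = A
  generalize (∑ u : V, κ u * |f u| ^ p) = B
  generalize (∑ u : V, ϱ u * |f u| ^ p) = C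
  rw [show 1 / 2 * (t ^ p * A) + t ^ p * B = t ^ p * (1 / 2 * A + B) by ring,
    mul_div_mul_left _ _ htp]

/-- on a connected graph, an eigenvalue with a strictly positive eigenfunction
must be the first variational eigenvalue `λ₁ = min_{f ∈ 𝒮_p} ℛ(f)`. -/
theorem stmt1 {V : Type*} [Fintype V]
    (G : SimpleGraph V) (ω : V → V → ℝ) (κ ϱ : V → ℝ) (p : ℝ) (hp : 1 < p)
    (hωsymm : ∀ u v, ω u v = ω v u)
    (hωpos : ∀ u v, G.Adj u v → 0 < ω u v)
    (hωzero : ∀ u v, ¬ G.Adj u v → ω u v = 0)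
    (hϱpos : ∀ u, 0 < ϱ u)
    (hconn : G.Connected)
    (lam1 : ℝ) (hlam1 : IsLeast (rayleigh ω κ ϱ p '' pSphere V p) lam1)
    (lam : ℝ) (g : V → ℝ) (heig : IsEigenpair ω κ ϱ p lam g)
    (hpos : ∀ u, 0 < g u) :
    lam = lam1 := by
  obtain ⟨hgne, heq⟩ := heig
  have hp0 : p ≠ 0 := by linarith
  have hV : Nonempty V := by
    rcases isEmpty_or_nonempty V with h | h
    · exact absurd (funext fun u => h.elim u) hgne
    · exact h
  have hωnn : ∀ u v, 0 ≤ ω u v := fun u v => by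
    rcases Classical.em (G.Adj u v) with h | h
    · exact (hωpos u v h).le
    · rw [hωzero u v h]
  -- denominator for g
  have hDg : 0 < ∑ u : V, ϱ u * |g u| ^ p :=
    Finset.sum_pos (fun u _ => mul_pos (hϱpos u)
      (Real.rpow_pos_of_pos (abs_pos.2 (hpos u).ne') p)) Finset.univ_nonempty
  -- rayleigh g = lam
  have hRg : rayleigh ω κ ϱ p g = lam := by
    rw [rayleigh, factA ω κ ϱ p lam hp hωsymm g heq]
    exact mul_div_cancel_right₀ lam hDg.ne'
  -- normalization of g
  set S : ℝ := ∑ u : V, |g u| ^ p with hSdef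
  have hS : 0 < S :=
    Finset.sum_pos (fun u _ => Real.rpow_pos_of_pos (abs_pos.2 (hpos u).ne') p)
      Finset.univ_nonempty
  set t : ℝ := S ^ (-p⁻¹) with htdef
  have ht : 0 < t := Real.rpow_pos_of_pos hS _
  have htp : t ^ p = S⁻¹ := by
    rw [htdef, ← Real.rpow_mul hS.le, show -p⁻¹ * p = -1 by field_simp,
      Real.rpow_neg_one]
  have hmem : (fun u => t * g u) ∈ pSphere V p := by
    show (∑ u : V, |t * g u| ^ p) = 1
    have : ∀ u : V, |t * g u| ^ p = t ^ p * |g u| ^ p := fun u => by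
      rw [abs_mul, abs_of_pos ht, Real.mul_rpow ht.le (abs_nonneg _)]
    simp only [this]
    rw [← Finset.mul_sum, ← hSdef, htp, inv_mul_cancel₀ hS.ne']
  -- lam1 ≤ lam
  have hle1 : lam1 ≤ lam := by
    have := hlam1.2 ⟨fun u => t * g u, hmem, rfl⟩
    rwa [rayleigh_smul ω κ ϱ p ht g, hRg] at this
  -- lam ≤ lam1
  obtain ⟨f, hf, hfr⟩ := hlam1.1
  have hfS : (∑ u : V, |f u| ^ p) = 1 := hf
  have hne : ∃ u : V, f u ≠ 0 := by
    by_contra h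
    push_neg at h
    have : (∑ u : V, |f u| ^ p) = 0 :=
      Finset.sum_eq_zero fun u _ => by simp [h u, Real.zero_rpow hp0]
    rw [hfS] at this
    norm_num at this
  obtain ⟨u0, hu0⟩ := hne
  have hDf : 0 < ∑ u : V, ϱ u * |f u| ^ p :=
    Finset.sum_pos' (fun u _ => mul_nonneg (hϱpos u).le (Real.rpow_nonneg (abs_nonneg _) p))
      ⟨u0, Finset.mem_univ u0,
        mul_pos (hϱpos u0) (Real.rpow_pos_of_pos (abs_pos.2 hu0) p)⟩
  have hB := factB ω κ ϱ p lam hp hωsymm hωnn g heq hpos f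
  have hNum : (1/2) * (∑ u : V, ∑ v : V, ω u v * |f u - f v| ^ p)
      + ∑ u : V, κ u * |f u| ^ p = lam1 * ∑ u : V, ϱ u * |f u| ^ p := by
    rw [← hfr, rayleigh, div_mul_cancel₀ _ hDf.ne']
  rw [hNum] at hB
  have hle2 : lam ≤ lam1 := le_of_mul_le_mul_right hB hDf
  linarith
end
end

section
/- Assume 𝒢 is connected and let λ_N = max_{f ∈ 𝒮_p} ℛ(f) be the largest variational eigenvalue of ℋ_p. Then |λ_N| ≤ max_{u ∈ V} ( 2^{p−1} Σ_{v ∼ u} ω_{uv}/ϱ_u + |κ_u|/ϱ_u ). -/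
noncomputable section

open Finset

lemma aux_pow_ineq {p : ℝ} (hp : 1 ≤ p) {a b : ℝ} (ha : 0 ≤ a) (hb : 0 ≤ b) :
    (a + b) ^ p ≤ 2 ^ (p - 1) * (a ^ p + b ^ p) := by
  have h := NNReal.rpow_add_le_mul_rpow_add_rpow a.toNNReal b.toNNReal hp
  have h' := NNReal.coe_le_coe.mpr h
  push_cast [NNReal.coe_rpow, Real.coe_toNNReal a ha, Real.coe_toNNReal b hb] at h'
  exact h'

lemma aux_main {V : Type*} [Fintype V] [Nonempty V]
    (G : SimpleGraph V) (ω : V → V → ℝ) (κ ϱ : V → ℝ) (p : ℝ) (hp : 1 < p)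
    (hωsymm : ∀ u v, ω u v = ω v u)
    (hωpos : ∀ u v, G.Adj u v → 0 < ω u v)
    (hωzero : ∀ u v, ¬ G.Adj u v → ω u v = 0)
    (hϱpos : ∀ u, 0 < ϱ u)
    (f : V → ℝ) (hf : ∑ u : V, |f u| ^ p = 1)
    (M : ℝ)
    (hM : ∀ u : V, (2 : ℝ) ^ (p - 1) * (∑ v : V, ω u v / ϱ u) + |κ u| / ϱ u ≤ M) :
    |((1 / 2 : ℝ) * ∑ u : V, ∑ v : V, ω u v * |f u - f v| ^ p + ∑ u : V, κ u * |f u| ^ p) /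
    ∑ u : V, ϱ u * |f u| ^ p| ≤ M := by
  have hω0 : ∀ u v, 0 ≤ ω u v := by
    intro u v
    by_cases h : G.Adj u v
    · exact (hωpos u v h).le
    · simp [hωzero u v h]
  have hr0 : ∀ x : ℝ, (0:ℝ) ≤ |x| ^ p := fun x => Real.rpow_nonneg (abs_nonneg x) p
  have hBpos : 0 < ∑ u : V, ϱ u * |f u| ^ p := by
    have hex : ∃ u : V, |f u| ^ p ≠ 0 := by
      by_contra h
      push_neg at h
      rw [Finset.sum_congr rfl (fun u _ => h u)] at hf
      simp at hf
    obtain ⟨u, hu⟩ := hex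
    refine Finset.sum_pos' (fun v _ => mul_nonneg (hϱpos v).le (hr0 _)) ⟨u, mem_univ u, ?_⟩
    exact mul_pos (hϱpos u) (lt_of_le_of_ne (hr0 _) (Ne.symm hu))
  rw [abs_div, abs_of_pos hBpos, div_le_iff₀ hBpos]
  have key : ∀ u v : V, |f u - f v| ^ p ≤ 2 ^ (p - 1) * (|f u| ^ p + |f v| ^ p) := by
    intro u v
    calc |f u - f v| ^ p ≤ (|f u| + |f v|) ^ p :=
          Real.rpow_le_rpow (abs_nonneg _) (abs_sub _ _) (by linarith)
      _ ≤ _ := aux_pow_ineq hp.le (abs_nonneg _) (abs_nonneg _)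
  have h1 : |(1 / 2 : ℝ) * ∑ u : V, ∑ v : V, ω u v * |f u - f v| ^ p + ∑ u : V, κ u * |f u| ^ p|
      ≤ (1 / 2 : ℝ) * ∑ u : V, ∑ v : V, ω u v * |f u - f v| ^ p
        + ∑ u : V, |κ u| * |f u| ^ p := by
    refine (abs_add_le _ _).trans (add_le_add ?_ ?_)
    · rw [abs_of_nonneg (mul_nonneg (by norm_num) (Finset.sum_nonneg fun u _ =>
        Finset.sum_nonneg fun v _ => mul_nonneg (hω0 u v) (hr0 _)))]
    · refine (Finset.abs_sum_le_sum_abs _ _).trans (le_of_eq ?_)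
      refine Finset.sum_congr rfl fun u _ => ?_
      rw [abs_mul, abs_of_nonneg (hr0 _)]
  refine h1.trans ?_
  have h2 : ∑ u : V, ∑ v : V, ω u v * |f u - f v| ^ p
      ≤ 2 * ∑ u : V, 2 ^ (p - 1) * (∑ v : V, ω u v) * |f u| ^ p := by
    have step : ∑ u : V, ∑ v : V, ω u v * |f u - f v| ^ p
        ≤ ∑ u : V, ∑ v : V, ω u v * (2 ^ (p - 1) * (|f u| ^ p + |f v| ^ p)) :=
      Finset.sum_le_sum fun u _ => Finset.sum_le_sum fun v _ =>
        mul_le_mul_of_nonneg_left (key u v) (hω0 u v)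
    refine step.trans (le_of_eq ?_)
    have e1 : ∑ u : V, ∑ v : V, ω u v * (2 ^ (p - 1) * (|f u| ^ p + |f v| ^ p))
        = (∑ u : V, ∑ v : V, 2 ^ (p - 1) * (ω u v * |f u| ^ p))
          + ∑ u : V, ∑ v : V, 2 ^ (p - 1) * (ω u v * |f v| ^ p) := by
      rw [← Finset.sum_add_distrib]
      refine Finset.sum_congr rfl fun u _ => ?_
      rw [← Finset.sum_add_distrib]
      exact Finset.sum_congr rfl fun v _ => by ring
    have swap : ∑ u : V, ∑ v : V, 2 ^ (p - 1) * (ω u v * |f v| ^ p)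
        = ∑ u : V, ∑ v : V, 2 ^ (p - 1) * (ω u v * |f u| ^ p) := by
      rw [Finset.sum_comm]
      exact Finset.sum_congr rfl fun u _ => Finset.sum_congr rfl fun v _ => by
        rw [hωsymm u v]
    rw [e1, swap, ← two_mul]
    congr 1
    refine Finset.sum_congr rfl fun u _ => ?_
    rw [← Finset.mul_sum, ← Finset.sum_mul]
    ring
  have h3 : (1 / 2 : ℝ) * ∑ u : V, ∑ v : V, ω u v * |f u - f v| ^ p
        + ∑ u : V, |κ u| * |f u| ^ p
      ≤ ∑ u : V, (2 ^ (p - 1) * (∑ v : V, ω u v) + |κ u|) * |f u| ^ p := by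
    have := mul_le_mul_of_nonneg_left h2 (by norm_num : (0:ℝ) ≤ 1/2)
    calc (1 / 2 : ℝ) * ∑ u : V, ∑ v : V, ω u v * |f u - f v| ^ p
          + ∑ u : V, |κ u| * |f u| ^ p
        ≤ (1/2) * (2 * ∑ u : V, 2 ^ (p - 1) * (∑ v : V, ω u v) * |f u| ^ p)
          + ∑ u : V, |κ u| * |f u| ^ p := by linarith
      _ = ∑ u : V, (2 ^ (p - 1) * (∑ v : V, ω u v) + |κ u|) * |f u| ^ p := by
          rw [show (1/2:ℝ) * (2 * ∑ u : V, 2 ^ (p - 1) * (∑ v : V, ω u v) * |f u| ^ p)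
            = ∑ u : V, 2 ^ (p - 1) * (∑ v : V, ω u v) * |f u| ^ p from by ring,
            ← Finset.sum_add_distrib]
          exact Finset.sum_congr rfl fun u _ => by ring
  refine h3.trans ?_
  rw [Finset.mul_sum]
  refine Finset.sum_le_sum fun u _ => ?_
  refine mul_le_mul_of_nonneg_right ?_ (hr0 _) |>.trans (le_of_eq (mul_assoc _ _ _))
  have hu := hM u
  have hϱ := hϱpos u
  rw [← Finset.sum_div, ← mul_div_assoc, ← add_div] at hu
  exact (div_le_iff₀ hϱ).mp hu


/-- a bound on the magnitude of the largest variational eigenvalue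
`λ_N = max_{f ∈ 𝒮_p} ℛ(f)`. -/
theorem stmt3 {V : Type*} [Fintype V] [Nonempty V]
    (G : SimpleGraph V) (ω : V → V → ℝ) (κ ϱ : V → ℝ) (p : ℝ) (hp : 1 < p)
    (hωsymm : ∀ u v, ω u v = ω v u)
    (hωpos : ∀ u v, G.Adj u v → 0 < ω u v)
    (hωzero : ∀ u v, ¬ G.Adj u v → ω u v = 0)
    (hϱpos : ∀ u, 0 < ϱ u)
    (hconn : G.Connected)
    (lamN : ℝ) (hlamN : IsGreatest (rayleigh ω κ ϱ p '' pSphere V p) lamN) :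
    |lamN| ≤ Finset.univ.sup' Finset.univ_nonempty
      (fun u : V => (2 : ℝ) ^ (p - 1) * (∑ v : V, ω u v / ϱ u) + |κ u| / ϱ u) := by
  obtain ⟨⟨f, hf, rfl⟩, -⟩ := hlamN
  exact aux_main G ω κ ϱ p hp hωsymm hωpos hωzero hϱpos f hf _
    (fun u => Finset.le_sup' (fun u : V => (2 : ℝ) ^ (p - 1) * (∑ v : V, ω u v / ϱ u) + |κ u| / ϱ u) (mem_univ u))
end
end

section
/- Assume 𝒢 is connected and let f : V → ℝ. Let E_z be the set of edges having at least one endpoint u with f(u) = 0. Then ζ(f) = |E| − |E_z| + z(f) − |V| + ν(f) − l(f). If moreover f is not identically zero, then ζ(f) ≤ |E| − |V| + ν(f) − l(f). -/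
noncomputable section

open Finset

-- edge partition lemma
lemma edge_part {V : Type*} [Fintype V] (G : SimpleGraph V) (f : V → ℝ) :
    G.edgeSet.ncard = {e ∈ G.edgeSet | ∃ u ∈ e, f u = 0}.ncard
      + (negGraph G f).edgeSet.ncard + (posGraph G f).edgeSet.ncard := by
  set A := {e ∈ G.edgeSet | ∃ u ∈ e, f u = 0}
  have hU : G.edgeSet = A ∪ (negGraph G f).edgeSet ∪ (posGraph G f).edgeSet := by
    ext e
    induction e using Sym2.ind with
    | _ u v =>
      simp only [Set.mem_union, Set.mem_setOf_eq, A, SimpleGraph.mem_edgeSet,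
        negGraph, posGraph, Sym2.mem_iff]
      constructor
      · intro h
        rcases lt_trichotomy (f u * f v) 0 with h1 | h1 | h1
        · exact Or.inl (Or.inr ⟨h, h1⟩)
        · rcases mul_eq_zero.1 h1 with h2 | h2
          · exact Or.inl (Or.inl ⟨h, u, Or.inl rfl, h2⟩)
          · exact Or.inl (Or.inl ⟨h, v, Or.inr rfl, h2⟩)
        · exact Or.inr ⟨h, h1⟩
      · rintro ((⟨h, -⟩ | ⟨h, -⟩) | ⟨h, -⟩) <;> exact h
  have hd1 : Disjoint A (negGraph G f).edgeSet := by
    rw [Set.disjoint_left]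
    intro e he hne
    induction e using Sym2.ind with
    | _ u v =>
      obtain ⟨-, w, hw, hfw⟩ := he
      have h2 : f u * f v < 0 := by obtain ⟨-, h⟩ := hne; exact h
      rcases Sym2.mem_iff.1 hw with rfl | rfl <;> simp [hfw] at h2
  have hd2 : Disjoint (A ∪ (negGraph G f).edgeSet) (posGraph G f).edgeSet := by
    rw [Set.disjoint_left]
    rintro e (he | he) hpe
    · induction e using Sym2.ind with
      | _ u v =>
        obtain ⟨-, w, hw, hfw⟩ := he
        have h2 : 0 < f u * f v := by obtain ⟨-, h⟩ := hpe; exact h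
        rcases Sym2.mem_iff.1 hw with rfl | rfl <;> simp [hfw] at h2
    · induction e using Sym2.ind with
      | _ u v =>
        have h2 : 0 < f u * f v := by obtain ⟨-, h⟩ := hpe; exact h
        have h3 : f u * f v < 0 := by obtain ⟨-, h⟩ := he; exact h
        linarith
  rw [hU, Set.ncard_union_eq hd2 (Set.toFinite _) (Set.toFinite _),
    Set.ncard_union_eq hd1 (Set.toFinite _) (Set.toFinite _)]

lemma zero_le_touch {V : Type*} [Fintype V] (G : SimpleGraph V) (hconn : G.Connected)
    (f : V → ℝ) (hf : f ≠ 0) :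
    {u : V | f u = 0}.ncard ≤ {e ∈ G.edgeSet | ∃ u ∈ e, f u = 0}.ncard := by
  obtain ⟨r, hr⟩ := Function.ne_iff.1 hf
  have key : ∀ z : V, f z = 0 → ∃ w, G.Adj z w ∧ G.dist w r < G.dist z r := by
    intro z hz
    have hzr : z ≠ r := fun h => hr (by rw [← h]; simpa using hz)
    have hd : 0 < G.dist z r := hconn.pos_dist_of_ne hzr
    obtain ⟨p, hp⟩ := hconn.exists_walk_length_eq_dist z r
    cases p with
    | nil => exact absurd rfl hzr
    | cons h q =>
      refine ⟨_, h, ?_⟩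
      have := SimpleGraph.dist_le q
      simp [SimpleGraph.Walk.length_cons] at hp
      omega
  choose! w hadj hdist using key
  apply Set.ncard_le_ncard_of_injOn (fun z => s(z, w z))
  · intro z hz
    exact ⟨hadj z hz, z, Sym2.mem_mk_left _ _, hz⟩
  · intro z₁ h₁ z₂ h₂ he
    rcases Sym2.eq_iff.1 he with ⟨h, -⟩ | ⟨ha, hb⟩
    · exact h
    · have d1 := hdist z₁ h₁
      have d2 := hdist z₂ h₂
      rw [hb, ha] at d1
      omega

/-- the identity `ζ(f) = |E| − |E_z| + z(f) − |V| + ν(f) − l(f)` on a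
connected graph, and, when `f` is not identically zero,
`ζ(f) ≤ |E| − |V| + ν(f) − l(f)`. -/
theorem stmt13 {V : Type*} [Fintype V]
    (G : SimpleGraph V) (hconn : G.Connected) (f : V → ℝ) :
    (zetaCount G f : ℤ) =
      (G.edgeSet.ncard : ℤ) - ({e ∈ G.edgeSet | ∃ u ∈ e, f u = 0}.ncard : ℤ)
        + (zeroCount f : ℤ) - (Fintype.card V : ℤ)
        + (nodalCount G f : ℤ) - loopCount G f ∧
    (f ≠ 0 →
      (zetaCount G f : ℤ) ≤ (G.edgeSet.ncard : ℤ) - (Fintype.card V : ℤ)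
        + (nodalCount G f : ℤ) - loopCount G f) := by
  have hE := edge_part G f
  have hV : {u : V | f u = 0}.ncard + {u : V | f u ≠ 0}.ncard = Fintype.card V := by
    have h := Set.ncard_add_ncard_compl {u : V | f u = 0}
    simpa [Set.compl_setOf, Nat.card_eq_fintype_card] using h
  constructor
  · unfold zetaCount zeroCount loopCount
    unfold zeroCount at hV
    omega
  · intro hf
    have hz := zero_le_touch G hconn f hf
    unfold zetaCount loopCount
    unfold zeroCount at hV
    omega
end
end
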